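/- Let g(x) ∈ 𝔽_q[x] be monic irreducible of degree r with g(0) ≠ 0, let t ≥ 1, and let u be a nonzero element of R_{g^t} = 𝔽_q[x]/(g(x)^t) with minimal-degree representative u(x). Set s = max{i ∈ ℕ : g(x)^i divides u(x)} and ū(x) = u(x)/g(x)^s. Then for every nonzero u' ∈ R_{g^t} with minimal-degree representative u'(x), u' lies in the x-orbit of u in R_{g^t} if and only if both (i) max{i ∈ ℕ : g(x)^i divides u'(x)} = s, and (ii) the class of u'(x)/g(x)^s in 𝔽_q[x]/(g(x)^{t−s}) lies in the x-orbit of the class of ū(x) in 𝔽_q[x]/(g(x)^{t−s}). -/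

import Mathlib

open Polynomial

/-- Let `u` be a nonzero element of `R_{g^t} = 𝔽_q[x]/(g^t)` with minimal-degree
representative `u(x)`, `s = max{i : g^i ∣ u(x)}` and `ū(x) = u(x)/g(x)^s`.
A nonzero `u'` (with minimal-degree representative `u'(x)`) lies in the
`x`-orbit of `u` iff (i) `max{i : g^i ∣ u'(x)} = s` and (ii) the class of
`u'(x)/g(x)^s` lies in the `x`-orbit of the class of `ū(x)` in
`𝔽_q[x]/(g^{t-s})`. -/
theorem stmt_9
    (p δ : ℕ) (hp : p.Prime) (hδ : 1 ≤ δ)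
    (F : Type) [Field F] [Fintype F] (hcard : Fintype.card F = p ^ δ)
    (r t : ℕ) (g : Polynomial F)
    (hmonic : g.Monic) (hirr : Irreducible g) (hdeg : g.natDegree = r)
    (hg0 : g.coeff 0 ≠ 0) (ht : 1 ≤ t)
    (u : Polynomial F) (hu : u ≠ 0) (hudeg : u.degree < (g ^ t).degree)
    (s : ℕ) (hs : g ^ s ∣ u ∧ ¬ g ^ (s + 1) ∣ u)
    (ub : Polynomial F) (hub : u = g ^ s * ub)
    (u' : Polynomial F) (hu' : u' ≠ 0) (hu'deg : u'.degree < (g ^ t).degree) :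
    (∃ k : ℕ, Ideal.Quotient.mk (Ideal.span {g ^ t}) u'
        = Ideal.Quotient.mk (Ideal.span {g ^ t}) X ^ k
          * Ideal.Quotient.mk (Ideal.span {g ^ t}) u)
    ↔ ((g ^ s ∣ u' ∧ ¬ g ^ (s + 1) ∣ u') ∧
        ∃ ub' : Polynomial F, u' = g ^ s * ub' ∧
          ∃ k : ℕ, Ideal.Quotient.mk (Ideal.span {g ^ (t - s)}) ub'
            = Ideal.Quotient.mk (Ideal.span {g ^ (t - s)}) X ^ k
              * Ideal.Quotient.mk (Ideal.span {g ^ (t - s)}) ub) := by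
  obtain ⟨hsu, hsu1⟩ := hs
  have hgne : g ≠ 0 := hirr.ne_zero
  have hrpos : 0 < g.natDegree := hirr.natDegree_pos
  have hgX : ¬ g ∣ X := by
    rintro ⟨c, hc⟩
    have h0 : c.eval 0 = 0 := by
      have := congrArg (Polynomial.eval 0) hc
      simp only [eval_X, eval_mul] at this
      rcases mul_eq_zero.mp this.symm with h | h
      · exact absurd h (by rwa [← coeff_zero_eq_eval_zero])
      · exact h
    obtain ⟨d, hd⟩ := (X_dvd_iff.mpr (by rwa [coeff_zero_eq_eval_zero]) : X ∣ c)
    apply hirr.not_isUnit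
    have : X * 1 = X * (g * d) := by linear_combination hc + g * hd
    have h1 : (1 : Polynomial F) = g * d := mul_left_cancel₀ X_ne_zero this
    exact IsUnit.of_mul_eq_one (a := g) d h1.symm
  have hcop : IsCoprime g X := hirr.coprime_iff_not_dvd.mpr hgX
  have hst : s < t := by
    have h1 : (g ^ s).natDegree ≤ u.natDegree :=
      natDegree_le_of_dvd hsu hu
    have h2 : u.natDegree < (g ^ t).natDegree :=
      natDegree_lt_natDegree hu hudeg
    rw [natDegree_pow] at h1
    rw [natDegree_pow] at h2
    have := lt_of_le_of_lt h1 h2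
    exact lt_of_mul_lt_mul_right this (le_of_lt hrpos)
  have hpow : g ^ s * g ^ (t - s) = g ^ t := by
    rw [← pow_add]; congr 1; omega
  constructor
  · rintro ⟨k, hk⟩
    rw [← map_pow, ← map_mul, Ideal.Quotient.eq, Ideal.mem_span_singleton] at hk
    obtain ⟨c, hc⟩ := hk
    have hu'eq : u' = X ^ k * u + g ^ t * c := by linear_combination hc
    have hdvd1 : g ^ s ∣ u' := by
      rw [hu'eq]
      exact dvd_add (hsu.mul_left _) (dvd_mul_of_dvd_left (pow_dvd_pow g hst.le) _)
    refine ⟨⟨hdvd1, ?_⟩, ?_⟩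
    · intro hdvd2
      apply hsu1
      have h1 : g ^ (s + 1) ∣ X ^ k * u := by
        have h2 : g ^ (s + 1) ∣ g ^ t * c := dvd_mul_of_dvd_left (pow_dvd_pow g hst) _
        have h3 := dvd_sub hdvd2 h2
        have : u' - g ^ t * c = X ^ k * u := by linear_combination hc
        rwa [this] at h3
      exact (IsCoprime.pow hcop).dvd_of_dvd_mul_left h1
    · obtain ⟨ub', hub'⟩ := hdvd1
      refine ⟨ub', hub', k, ?_⟩
      rw [← map_pow, ← map_mul, Ideal.Quotient.eq, Ideal.mem_span_singleton]
      refine ⟨c, ?_⟩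
      have hmain : g ^ s * (ub' - X ^ k * ub) = g ^ s * (g ^ (t - s) * c) := by
        rw [mul_sub]
        have : g ^ s * (g ^ (t - s) * c) = g ^ t * c := by rw [← mul_assoc, hpow]
        rw [this]
        linear_combination hc - hub' + X ^ k * hub
      exact mul_left_cancel₀ (pow_ne_zero s hgne) hmain
  · rintro ⟨_, ub', hub', k, hk⟩
    rw [← map_pow, ← map_mul, Ideal.Quotient.eq, Ideal.mem_span_singleton] at hk
    obtain ⟨c, hc⟩ := hk
    refine ⟨k, ?_⟩
    rw [← map_pow, ← map_mul, Ideal.Quotient.eq, Ideal.mem_span_singleton]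
    exact ⟨c, by rw [hub', hub]; linear_combination g ^ s * hc + c * hpow⟩
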